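/- arXiv:1706.05213 — 2 statements merged into one kernel-verified Lean document; each statement's English description precedes it below -/
import Mathlib

section
/- Let μ, ν > 0 and let T be the operator on bounded measurable functions ℝ → [0,1] given by (TΨ)(t) = μν·e^{μt}·I(Ψ) for t ≤ 0 and (TΨ)(t) = μν·e^{−νt}·I(Ψ) + 1 − e^{−νt} for t > 0, where I(Ψ) = ∫₀^∞∫₀^∞ Ψ(u − v)·e^{−μu−νv} du dv. Define Ψ₁(t) = (ν/(μ+ν))·e^{μt} for t ≤ 0, Ψ₁(t) = 1 − (μ/(μ+ν))·e^{−νt} for t > 0, and Ψ_{k+1} = TΨ_k for k ≥ 1. If ν < μ, then Ψ_{k+1}(t) ≤ Ψ_k(t) for every k ≥ 1 and every real t; if ν > μ, then Ψ_{k+1}(t) ≥ Ψ_k(t) for every k ≥ 1 and every real t. -/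
open MeasureTheory

open Set Real


lemma mytendsto {c : ℝ} (hc : 0 < c) :
    Filter.Tendsto (fun x : ℝ => Real.exp (-c*x)) Filter.atTop (nhds 0) := by
  have := Real.tendsto_exp_neg_atTop_nhds_zero.comp
    (Filter.Tendsto.const_mul_atTop hc Filter.tendsto_id)
  refine Filter.Tendsto.congr (fun x => ?_) this
  simp [Function.comp, neg_mul]

lemma myexp_Ioi {c : ℝ} (hc : 0 < c) (a : ℝ) :
    ∫ x in Ioi a, Real.exp (-c*x) = Real.exp (-c*a)/c := by
  have h : ∀ x ∈ Ici a, HasDerivAt (fun x => -Real.exp (-c*x)/c) (Real.exp (-c*x)) x := by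
    intro x _
    have h1 := (((hasDerivAt_id x).const_mul (-c)).exp.neg).div_const c
    simpa [neg_mul, mul_comm, mul_div_assoc, mul_div_cancel_right₀, hc.ne'] using h1
  have h2 : Filter.Tendsto (fun x : ℝ => -Real.exp (-c*x)/c) Filter.atTop (nhds 0) := by
    simpa using ((mytendsto hc).neg.div_const c)
  have := integral_Ioi_of_hasDerivAt_of_tendsto' h (exp_neg_integrableOn_Ioi a hc) h2
  rw [this]; ring

lemma myxexp_int {c : ℝ} (hc : 0 < c) :
    IntegrableOn (fun x : ℝ => x * Real.exp (-c*x)) (Ioi 0) := by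
  have h := integrableOn_rpow_mul_exp_neg_mul_rpow (p := 1) (s := 1) (b := c) (by norm_num) one_pos hc
  refine h.congr_fun (fun x hx => ?_) measurableSet_Ioi
  norm_num [Real.rpow_one]

lemma myxexp_Ioi {c : ℝ} (hc : 0 < c) :
    ∫ x in Ioi 0, x * Real.exp (-c*x) = 1/c^2 := by
  have h := Real.integral_rpow_mul_exp_neg_mul_Ioi (a := 2) (r := c) (by norm_num) hc
  rw [show (2:ℝ)-1 = 1 by norm_num] at h
  rw [show (∫ x in Ioi (0:ℝ), x * Real.exp (-c*x)) = ∫ t in Ioi (0:ℝ), t ^ (1:ℝ) * Real.exp (-(c*t)) from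
    setIntegral_congr_fun measurableSet_Ioi (fun x _ => by rw [Real.rpow_one]; ring_nf), h,
    Real.Gamma_two]
  rw [show ((1:ℝ)/c) ^ (2:ℝ) = (1/c)^(2:ℕ) by rw [← Real.rpow_natCast]; norm_num]
  field_simp

lemma myexp_interval {c : ℝ} (hc : c ≠ 0) (u : ℝ) :
    ∫ x in (0:ℝ)..u, Real.exp (-c*x) = (1 - Real.exp (-c*u))/c := by
  have := intervalIntegral.integral_comp_mul_left (a := (0:ℝ)) (b := u) (fun x => Real.exp x) (neg_ne_zero.2 hc)
  simp only [mul_zero, integral_exp, smul_eq_mul] at this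
  rw [this, Real.exp_zero, inv_neg, div_eq_mul_inv]; ring


section J
variable {μ ν : ℝ} (hμ : 0 < μ) (hν : 0 < ν) {Ψ : ℝ → ℝ}

lemma exp_split (μ ν u v : ℝ) : Real.exp (-μ*u - ν*v) = Real.exp (-μ*u) * Real.exp (-ν*v) := by
  rw [← Real.exp_add]; ring_nf

include hν in
lemma inner_int (hm : Measurable Ψ) (h0 : ∀ t, 0 ≤ Ψ t) (h1 : ∀ t, Ψ t ≤ 1) (u : ℝ) :
    IntegrableOn (fun v => Ψ (u-v) * Real.exp (-μ*u - ν*v)) (Ioi 0) := by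
  have hg : IntegrableOn (fun v => Real.exp (-μ*u) * Real.exp (-ν*v)) (Ioi 0) :=
    (exp_neg_integrableOn_Ioi 0 hν).const_mul _
  refine Integrable.mono' hg ?_ ?_
  · exact ((hm.comp ((measurable_const (a := u)).sub measurable_id)).mul
      (Real.measurable_exp.comp ((measurable_const.mul measurable_const).sub
        (measurable_const.mul measurable_id)))).aestronglyMeasurable
  · refine Filter.Eventually.of_forall (fun v => ?_)
    rw [Real.norm_eq_abs, abs_of_nonneg (mul_nonneg (h0 _) (Real.exp_pos _).le), ← exp_split]
    exact mul_le_of_le_one_left (Real.exp_pos _).le (h1 _)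

include hμ hν in
lemma inner_bounds (hm : Measurable Ψ) (h0 : ∀ t, 0 ≤ Ψ t) (h1 : ∀ t, Ψ t ≤ 1) (u : ℝ) :
    0 ≤ (∫ v in Ioi 0, Ψ (u-v) * Real.exp (-μ*u - ν*v)) ∧
    (∫ v in Ioi 0, Ψ (u-v) * Real.exp (-μ*u - ν*v)) ≤ Real.exp (-μ*u) * (1/ν) := by
  constructor
  · exact setIntegral_nonneg measurableSet_Ioi
      (fun v _ => mul_nonneg (h0 _) (Real.exp_pos _).le)
  · have hg : IntegrableOn (fun v => Real.exp (-μ*u) * Real.exp (-ν*v)) (Ioi 0) :=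
      (exp_neg_integrableOn_Ioi 0 hν).const_mul _
    calc (∫ v in Ioi 0, Ψ (u-v) * Real.exp (-μ*u - ν*v))
        ≤ ∫ v in Ioi 0, Real.exp (-μ*u) * Real.exp (-ν*v) := by
          refine setIntegral_mono (inner_int hν hm h0 h1 u) hg (fun v => ?_)
          rw [exp_split]
          exact mul_le_of_le_one_left (mul_nonneg (Real.exp_pos _).le (Real.exp_pos _).le) (h1 _)
          |>.trans_eq (by ring)
      _ = Real.exp (-μ*u) * (1/ν) := by
          rw [MeasureTheory.integral_const_mul, myexp_Ioi hν]; norm_num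

include hμ hν in
lemma outer_int (hm : Measurable Ψ) (h0 : ∀ t, 0 ≤ Ψ t) (h1 : ∀ t, Ψ t ≤ 1) :
    IntegrableOn (fun u => ∫ v in Ioi 0, Ψ (u-v) * Real.exp (-μ*u - ν*v)) (Ioi 0) := by
  have hg : IntegrableOn (fun u => Real.exp (-μ*u) * (1/ν)) (Ioi 0) :=
    (exp_neg_integrableOn_Ioi 0 hμ).mul_const _
  refine Integrable.mono' hg ?_ ?_
  · have hsm : StronglyMeasurable (fun p : ℝ × ℝ => Ψ (p.1 - p.2) * Real.exp (-μ*p.1 - ν*p.2)) := by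
      refine Measurable.stronglyMeasurable ?_
      exact (hm.comp (measurable_fst.sub measurable_snd)).mul
        (Real.measurable_exp.comp ((measurable_const.mul measurable_fst).sub
          (measurable_const.mul measurable_snd)))
    have := hsm.integral_prod_right' (ν := volume.restrict (Ioi 0))
    exact this.aestronglyMeasurable.restrict
  · refine Filter.Eventually.of_forall (fun u => ?_)
    rw [Real.norm_eq_abs, abs_of_nonneg (inner_bounds hμ hν hm h0 h1 u).1]
    exact (inner_bounds hμ hν hm h0 h1 u).2

include hμ hν in
lemma J_nonneg (hm : Measurable Ψ) (h0 : ∀ t, 0 ≤ Ψ t) (h1 : ∀ t, Ψ t ≤ 1) :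
    0 ≤ ∫ u in Ioi (0:ℝ), ∫ v in Ioi (0:ℝ), Ψ (u-v) * Real.exp (-μ*u - ν*v) :=
  setIntegral_nonneg measurableSet_Ioi (fun u _ => (inner_bounds hμ hν hm h0 h1 u).1)

include hμ hν in
lemma J_le (hm : Measurable Ψ) (h0 : ∀ t, 0 ≤ Ψ t) (h1 : ∀ t, Ψ t ≤ 1) :
    (∫ u in Ioi (0:ℝ), ∫ v in Ioi (0:ℝ), Ψ (u-v) * Real.exp (-μ*u - ν*v)) ≤ 1/(μ*ν) := by
  have hg : IntegrableOn (fun u => Real.exp (-μ*u) * (1/ν)) (Ioi 0) :=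
    (exp_neg_integrableOn_Ioi 0 hμ).mul_const _
  calc (∫ u in Ioi (0:ℝ), ∫ v in Ioi (0:ℝ), Ψ (u-v) * Real.exp (-μ*u - ν*v))
      ≤ ∫ u in Ioi (0:ℝ), Real.exp (-μ*u) * (1/ν) :=
        setIntegral_mono (outer_int hμ hν hm h0 h1) hg
          (fun u => (inner_bounds hμ hν hm h0 h1 u).2)
    _ = 1/(μ*ν) := by
        rw [MeasureTheory.integral_mul_const, myexp_Ioi hμ]; norm_num; ring

lemma J_mono {Φ : ℝ → ℝ} (hmΨ : Measurable Ψ) (h0Ψ : ∀ t, 0 ≤ Ψ t) (h1Ψ : ∀ t, Ψ t ≤ 1)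
    (hmΦ : Measurable Φ) (h0Φ : ∀ t, 0 ≤ Φ t) (h1Φ : ∀ t, Φ t ≤ 1)
    (hle : ∀ t, Ψ t ≤ Φ t) (hμ : 0 < μ) (hν : 0 < ν) :
    (∫ u in Ioi (0:ℝ), ∫ v in Ioi (0:ℝ), Ψ (u-v) * Real.exp (-μ*u - ν*v)) ≤
    (∫ u in Ioi (0:ℝ), ∫ v in Ioi (0:ℝ), Φ (u-v) * Real.exp (-μ*u - ν*v)) := by
  refine setIntegral_mono (outer_int hμ hν hmΨ h0Ψ h1Ψ) (outer_int hμ hν hmΦ h0Φ h1Φ) (fun u => ?_)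
  exact setIntegral_mono (inner_int hν hmΨ h0Ψ h1Ψ u) (inner_int hν hmΦ h0Φ h1Φ u)
    (fun v => mul_le_mul_of_nonneg_right (hle _) (Real.exp_pos _).le)

end J


section Jf
variable {μ ν : ℝ} (hμ : 0 < μ) (hν : 0 < ν)

include hμ hν in
lemma f1_props : Measurable (fun t : ℝ => if t ≤ 0 then ν/(μ+ν) * Real.exp (μ*t)
      else 1 - μ/(μ+ν) * Real.exp (-ν*t)) ∧
    (∀ t : ℝ, 0 ≤ (if t ≤ 0 then ν/(μ+ν) * Real.exp (μ*t) else 1 - μ/(μ+ν) * Real.exp (-ν*t))) ∧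
    (∀ t : ℝ, (if t ≤ 0 then ν/(μ+ν) * Real.exp (μ*t) else 1 - μ/(μ+ν) * Real.exp (-ν*t)) ≤ 1) := by
  have hμν : 0 < μ + ν := by linarith
  refine ⟨?_, ?_, ?_⟩
  · refine Measurable.ite (measurableSet_le measurable_id measurable_const) ?_ ?_
    · exact measurable_const.mul (Real.measurable_exp.comp (measurable_const.mul measurable_id))
    · exact measurable_const.sub
        (measurable_const.mul (Real.measurable_exp.comp (measurable_const.mul measurable_id)))
  · intro t
    split_ifs with h
    · positivity
    · have h1 : Real.exp (-ν*t) ≤ 1 := by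
        rw [← Real.exp_zero]
        exact Real.exp_le_exp.2 (by nlinarith [not_le.1 h])
      have h2 : μ/(μ+ν) ≤ 1 := by rw [div_le_one hμν]; linarith
      nlinarith [div_nonneg hμ.le hμν.le]
  · intro t
    split_ifs with h
    · have h1 : Real.exp (μ*t) ≤ 1 := by
        rw [← Real.exp_zero]
        exact Real.exp_le_exp.2 (by nlinarith)
      have h2 : ν/(μ+ν) ≤ 1 := by rw [div_le_one hμν]; linarith
      nlinarith [div_nonneg hν.le hμν.le]
    · have : 0 ≤ μ/(μ+ν) * Real.exp (-ν*t) := by positivity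
      linarith

include hμ hν in
lemma inner_eval : ∀ u ∈ Ioi (0:ℝ),
    (∫ v in Ioi (0:ℝ), (if u-v ≤ 0 then ν/(μ+ν) * Real.exp (μ*(u-v))
        else 1 - μ/(μ+ν) * Real.exp (-ν*(u-v))) * Real.exp (-μ*u - ν*v)) =
    (1/ν) * Real.exp (-μ*u) - (1/ν) * Real.exp (-(μ+ν)*u)
      - (μ/(μ+ν)) * (u * Real.exp (-(μ+ν)*u))
      + (ν/((μ+ν)*(μ+ν))) * Real.exp (-(μ+ν)*u) := by
  intro u hu
  have hu' : (0:ℝ) < u := hu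
  have hμν : 0 < μ + ν := by linarith
  obtain ⟨hmf, h0f, h1f⟩ := f1_props hμ hν
  have hint := inner_int (μ := μ) hν hmf h0f h1f u
  have hI1 : IntegrableOn (fun v => (if u-v ≤ 0 then ν/(μ+ν) * Real.exp (μ*(u-v))
      else 1 - μ/(μ+ν) * Real.exp (-ν*(u-v))) * Real.exp (-μ*u - ν*v)) (Ioc 0 u) :=
    hint.mono_set Ioc_subset_Ioi_self
  have hI2 : IntegrableOn (fun v => (if u-v ≤ 0 then ν/(μ+ν) * Real.exp (μ*(u-v))
      else 1 - μ/(μ+ν) * Real.exp (-ν*(u-v))) * Real.exp (-μ*u - ν*v)) (Ioi u) :=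
    hint.mono_set (Ioi_subset_Ioi hu'.le)
  rw [← Ioc_union_Ioi_eq_Ioi hu'.le,
    setIntegral_union (Ioc_disjoint_Ioi le_rfl) measurableSet_Ioi hI1 hI2]
  have hA : (∫ v in Ioc (0:ℝ) u, (if u-v ≤ 0 then ν/(μ+ν) * Real.exp (μ*(u-v))
      else 1 - μ/(μ+ν) * Real.exp (-ν*(u-v))) * Real.exp (-μ*u - ν*v)) =
      Real.exp (-μ*u) * ((1 - Real.exp (-ν*u))/ν) - u * (μ/(μ+ν) * Real.exp (-(μ+ν)*u)) := by
    rw [setIntegral_congr_fun measurableSet_Ioc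
      (g := fun v => Real.exp (-μ*u) * Real.exp (-ν*v) - μ/(μ+ν) * Real.exp (-(μ+ν)*u)) ?_]
    · have ii1 : IntervalIntegrable (fun v : ℝ => Real.exp (-μ*u) * Real.exp (-ν*v)) volume 0 u := by
        apply Continuous.intervalIntegrable; fun_prop
      have ii2 : IntervalIntegrable (fun _ : ℝ => μ/(μ+ν) * Real.exp (-(μ+ν)*u)) volume 0 u :=
        intervalIntegrable_const
      rw [← intervalIntegral.integral_of_le hu'.le, intervalIntegral.integral_sub ii1 ii2,
        intervalIntegral.integral_const_mul, myexp_interval hν.ne', intervalIntegral.integral_const]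
      simp only [sub_zero, smul_eq_mul]
    · intro v hv
      by_cases h : u - v ≤ 0
      · have hv2 : v = u := le_antisymm hv.2 (by linarith)
        subst hv2
        simp only [h, if_true]
        have e4 : Real.exp (-μ*v) * Real.exp (-ν*v) = Real.exp (-(μ+ν)*v) := by
          rw [← Real.exp_add]; ring_nf
        have e5 : Real.exp (μ*(v-v)) = 1 := by simp
        have e6 : Real.exp (-μ*v - ν*v) = Real.exp (-(μ+ν)*v) := by ring_nf
        rw [e5, e6, ← e4]
        field_simp
        ring
      · simp only [h, if_false]
        have e1 : Real.exp (-ν*(u-v)) * Real.exp (-μ*u - ν*v) = Real.exp (-(μ+ν)*u) := by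
          rw [← Real.exp_add]; ring_nf
        have e2 : Real.exp (-μ*u - ν*v) = Real.exp (-μ*u) * Real.exp (-ν*v) := by
          rw [← Real.exp_add]; ring_nf
        rw [sub_mul, one_mul, mul_assoc, e1, e2]
  have hB : (∫ v in Ioi u, (if u-v ≤ 0 then ν/(μ+ν) * Real.exp (μ*(u-v))
      else 1 - μ/(μ+ν) * Real.exp (-ν*(u-v))) * Real.exp (-μ*u - ν*v)) =
      ν/(μ+ν) * (Real.exp (-(μ+ν)*u)/(μ+ν)) := by
    rw [setIntegral_congr_fun measurableSet_Ioi
      (g := fun v => ν/(μ+ν) * Real.exp (-(μ+ν)*v)) ?_]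
    · rw [MeasureTheory.integral_const_mul, myexp_Ioi hμν]
    · intro v hv
      have h : u - v ≤ 0 := by simp only [mem_Ioi] at hv; linarith
      simp only [h, if_true]
      have e3 : Real.exp (μ*(u-v)) * Real.exp (-μ*u - ν*v) = Real.exp (-(μ+ν)*v) := by
        rw [← Real.exp_add]; ring_nf
      rw [mul_assoc, e3]
  rw [hA, hB]
  have e4 : Real.exp (-μ*u) * Real.exp (-ν*u) = Real.exp (-(μ+ν)*u) := by
    rw [← Real.exp_add]; ring_nf
  rw [← e4]
  field_simp

include hμ hν in
lemma myJf :
    (∫ u in Ioi (0:ℝ), ∫ v in Ioi (0:ℝ), (if u-v ≤ 0 then ν/(μ+ν) * Real.exp (μ*(u-v))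
        else 1 - μ/(μ+ν) * Real.exp (-ν*(u-v))) * Real.exp (-μ*u - ν*v)) =
    1/(μ*(μ+ν)) + (ν-μ)/(μ+ν)^3 := by
  have hμν : 0 < μ + ν := by linarith
  rw [setIntegral_congr_fun measurableSet_Ioi (inner_eval hμ hν)]
  have i1 : IntegrableOn (fun u : ℝ => (1/ν) * Real.exp (-μ*u)) (Ioi 0) :=
    (exp_neg_integrableOn_Ioi 0 hμ).const_mul _
  have i2 : IntegrableOn (fun u : ℝ => (1/ν) * Real.exp (-(μ+ν)*u)) (Ioi 0) :=
    (exp_neg_integrableOn_Ioi 0 hμν).const_mul _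
  have i3 : IntegrableOn (fun u : ℝ => (μ/(μ+ν)) * (u * Real.exp (-(μ+ν)*u))) (Ioi 0) :=
    (myxexp_int hμν).const_mul _
  have i4 : IntegrableOn (fun u : ℝ => (ν/((μ+ν)*(μ+ν))) * Real.exp (-(μ+ν)*u)) (Ioi 0) :=
    (exp_neg_integrableOn_Ioi 0 hμν).const_mul _
  have i12 : IntegrableOn (fun u : ℝ => (1/ν) * Real.exp (-μ*u) - (1/ν) * Real.exp (-(μ+ν)*u)) (Ioi 0) := i1.sub i2
  have i123 : IntegrableOn (fun u : ℝ => (1/ν) * Real.exp (-μ*u) - (1/ν) * Real.exp (-(μ+ν)*u)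
      - (μ/(μ+ν)) * (u * Real.exp (-(μ+ν)*u))) (Ioi 0) := i12.sub i3
  rw [MeasureTheory.integral_add i123 i4,
    MeasureTheory.integral_sub i12 i3, MeasureTheory.integral_sub i1 i2,
    MeasureTheory.integral_const_mul, MeasureTheory.integral_const_mul,
    MeasureTheory.integral_const_mul, MeasureTheory.integral_const_mul,
    myexp_Ioi hμ, myexp_Ioi hμν, myxexp_Ioi hμν]
  norm_num
  field_simp
  ring

end Jf



/-- Monotonicity of the sequence `Ψ_k` produced by the one-step recursion
operator `T` starting from `Ψ₁`: nonincreasing in `k` if `ν < μ`, nondecreasing if `ν > μ`. -/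
theorem psi_sequence_monotone (μ ν : ℝ) (hμ : 0 < μ) (hν : 0 < ν)
    (Ψ : ℕ → ℝ → ℝ)
    (hΨ₁ : ∀ t : ℝ, Ψ 1 t = if t ≤ 0 then ν/(μ+ν) * Real.exp (μ*t)
      else 1 - μ/(μ+ν) * Real.exp (-ν*t))
    (hrec : ∀ k : ℕ, 1 ≤ k → ∀ t : ℝ, Ψ (k+1) t =
      if t ≤ 0 then
        μ * ν * Real.exp (μ*t) *
          ∫ u in Set.Ioi (0:ℝ), ∫ v in Set.Ioi (0:ℝ), Ψ k (u - v) * Real.exp (-μ*u - ν*v)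
      else
        μ * ν * Real.exp (-ν*t) *
          (∫ u in Set.Ioi (0:ℝ), ∫ v in Set.Ioi (0:ℝ), Ψ k (u - v) * Real.exp (-μ*u - ν*v))
          + 1 - Real.exp (-ν*t)) :
    (ν < μ → ∀ k : ℕ, 1 ≤ k → ∀ t : ℝ, Ψ (k+1) t ≤ Ψ k t) ∧
    (μ < ν → ∀ k : ℕ, 1 ≤ k → ∀ t : ℝ, Ψ k t ≤ Ψ (k+1) t) := by
  have hμν : 0 < μ + ν := by linarith
  -- basic properties of each Ψ k
  have props : ∀ k : ℕ, 1 ≤ k →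
      Measurable (Ψ k) ∧ (∀ t, 0 ≤ Ψ k t) ∧ (∀ t, Ψ k t ≤ 1) := by
    intro k hk
    induction k, hk using Nat.le_induction with
    | base =>
      have hfun : Ψ 1 = fun t => if t ≤ 0 then ν/(μ+ν) * Real.exp (μ*t)
          else 1 - μ/(μ+ν) * Real.exp (-ν*t) := funext hΨ₁
      rw [hfun]
      exact ⟨(f1_props hμ hν).1, (f1_props hμ hν).2.1, (f1_props hμ hν).2.2⟩
    | succ k hk ih =>
      obtain ⟨hm, h0, h1⟩ := ih
      set J := ∫ u in Set.Ioi (0:ℝ), ∫ v in Set.Ioi (0:ℝ), Ψ k (u - v) * Real.exp (-μ*u - ν*v)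
        with hJdef
      have hJ0 : 0 ≤ J := J_nonneg hμ hν hm h0 h1
      have hJ1 : μ * ν * J ≤ 1 := by
        have := J_le hμ hν hm h0 h1
        rw [le_div_iff₀ (by positivity)] at this
        linarith [this]
      have hfun : Ψ (k+1) = fun t => if t ≤ 0 then μ * ν * Real.exp (μ*t) * J
          else μ * ν * Real.exp (-ν*t) * J + 1 - Real.exp (-ν*t) := funext (hrec k hk)
      rw [hfun]
      refine ⟨?_, ?_, ?_⟩
      · refine Measurable.ite (measurableSet_le measurable_id measurable_const) ?_ ?_
        · exact ((measurable_const.mul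
            (Real.measurable_exp.comp (measurable_const.mul measurable_id))).mul measurable_const)
        · exact (((measurable_const.mul
            (Real.measurable_exp.comp (measurable_const.mul measurable_id))).mul
              measurable_const).add measurable_const).sub
            (Real.measurable_exp.comp (measurable_const.mul measurable_id))
      · intro t
        dsimp only
        split_ifs with ht
        · positivity
        · have hE1 : Real.exp (-ν*t) ≤ 1 := by
            rw [← Real.exp_zero]
            exact Real.exp_le_exp.2 (by nlinarith [not_le.1 ht])
          have hE0 : 0 < Real.exp (-ν*t) := Real.exp_pos _
          have hμνJ : 0 ≤ μ * ν * J := by positivity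
          nlinarith [mul_nonneg (sub_nonneg.2 hJ1) (sub_nonneg.2 hE1)]
      · intro t
        dsimp only
        split_ifs with ht
        · have hE1 : Real.exp (μ*t) ≤ 1 := by
            rw [← Real.exp_zero]
            exact Real.exp_le_exp.2 (by nlinarith)
          have hE0 : 0 < Real.exp (μ*t) := Real.exp_pos _
          have hμνJ : 0 ≤ μ * ν * J := by positivity
          nlinarith
        · have hE1 : Real.exp (-ν*t) ≤ 1 := by
            rw [← Real.exp_zero]
            exact Real.exp_le_exp.2 (by nlinarith [not_le.1 ht])
          have hE0 : 0 < Real.exp (-ν*t) := Real.exp_pos _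
          have hμνJ : 0 ≤ μ * ν * J := by positivity
          nlinarith
  -- exact value of the first iterated integral
  have hJ1val : (∫ u in Set.Ioi (0:ℝ), ∫ v in Set.Ioi (0:ℝ), Ψ 1 (u - v) * Real.exp (-μ*u - ν*v))
      = 1/(μ*(μ+ν)) + (ν-μ)/(μ+ν)^3 := by
    simp only [hΨ₁]
    exact myJf hμ hν
  constructor
  · -- ν < μ : nonincreasing
    intro hlt k hk
    induction k, hk using Nat.le_induction with
    | base =>
      intro t
      rw [hrec 1 le_rfl t, hΨ₁ t, hJ1val]
      have hK : μ*ν*(1/(μ*(μ+ν)) + (ν-μ)/(μ+ν)^3) ≤ ν/(μ+ν) := by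
        have h1 : μ*ν*(1/(μ*(μ+ν)) + (ν-μ)/(μ+ν)^3) = ν/(μ+ν) + μ*ν*(ν-μ)/(μ+ν)^3 := by
          field_simp
        have h2 : μ*ν*(ν-μ)/(μ+ν)^3 ≤ 0 := by
          apply div_nonpos_of_nonpos_of_nonneg
          · nlinarith [mul_pos hμ hν]
          · positivity
        linarith
      set K := 1/(μ*(μ+ν)) + (ν-μ)/(μ+ν)^3 with hKdef
      split_ifs with ht
      · calc μ*ν*Real.exp (μ*t)*K = (μ*ν*K)*Real.exp (μ*t) := by ring
          _ ≤ (ν/(μ+ν))*Real.exp (μ*t) := mul_le_mul_of_nonneg_right hK (Real.exp_pos _).le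
      · have h2 := mul_le_mul_of_nonneg_right hK (Real.exp_pos (-ν*t)).le
        have h3 : ν/(μ+ν)*Real.exp (-ν*t) = Real.exp (-ν*t) - μ/(μ+ν)*Real.exp (-ν*t) := by
          field_simp; ring
        have h4 : μ*ν*Real.exp (-ν*t)*K = (μ*ν*K)*Real.exp (-ν*t) := by ring
        linarith
    | succ k hk ih =>
      intro t
      obtain ⟨hm1, h01, h11⟩ := props k hk
      obtain ⟨hm2, h02, h12⟩ := props (k+1) (by omega)
      have hJ := J_mono (μ := μ) (ν := ν) hm2 h02 h12 hm1 h01 h11 ih hμ hν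
      rw [hrec (k+1) (by omega) t, hrec k hk t]
      split_ifs with ht
      · exact mul_le_mul_of_nonneg_left hJ (by positivity)
      · have := mul_le_mul_of_nonneg_left hJ (show (0:ℝ) ≤ μ*ν*Real.exp (-ν*t) by positivity)
        linarith
  · -- μ < ν : nondecreasing
    intro hlt k hk
    induction k, hk using Nat.le_induction with
    | base =>
      intro t
      rw [hrec 1 le_rfl t, hΨ₁ t, hJ1val]
      have hK : ν/(μ+ν) ≤ μ*ν*(1/(μ*(μ+ν)) + (ν-μ)/(μ+ν)^3) := by
        have h1 : μ*ν*(1/(μ*(μ+ν)) + (ν-μ)/(μ+ν)^3) = ν/(μ+ν) + μ*ν*(ν-μ)/(μ+ν)^3 := by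
          field_simp
        have h2 : 0 ≤ μ*ν*(ν-μ)/(μ+ν)^3 := by
          apply div_nonneg
          · nlinarith [mul_pos hμ hν]
          · positivity
        linarith
      set K := 1/(μ*(μ+ν)) + (ν-μ)/(μ+ν)^3 with hKdef
      split_ifs with ht
      · calc ν/(μ+ν)*Real.exp (μ*t) ≤ (μ*ν*K)*Real.exp (μ*t) :=
            mul_le_mul_of_nonneg_right hK (Real.exp_pos _).le
          _ = μ*ν*Real.exp (μ*t)*K := by ring
      · have h2 := mul_le_mul_of_nonneg_right hK (Real.exp_pos (-ν*t)).le
        have h3 : ν/(μ+ν)*Real.exp (-ν*t) = Real.exp (-ν*t) - μ/(μ+ν)*Real.exp (-ν*t) := by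
          field_simp; ring
        have h4 : μ*ν*Real.exp (-ν*t)*K = (μ*ν*K)*Real.exp (-ν*t) := by ring
        linarith
    | succ k hk ih =>
      intro t
      obtain ⟨hm1, h01, h11⟩ := props k hk
      obtain ⟨hm2, h02, h12⟩ := props (k+1) (by omega)
      have hJ := J_mono (μ := μ) (ν := ν) hm1 h01 h11 hm2 h02 h12 ih hμ hν
      rw [hrec (k+1) (by omega) t, hrec k hk t]
      split_ifs with ht
      · exact mul_le_mul_of_nonneg_left hJ (by positivity)
      · have := mul_le_mul_of_nonneg_left hJ (show (0:ℝ) ≤ μ*ν*Real.exp (-ν*t) by positivity)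
        linarith
end

section
/- Let μ, ν > 0 and let T be the operator given by (TΨ)(t) = μν·e^{μt}·I(Ψ) for t ≤ 0 and (TΨ)(t) = μν·e^{−νt}·I(Ψ) + 1 − e^{−νt} for t > 0, where I(Ψ) = ∫₀^∞∫₀^∞ Ψ(u − v)·e^{−μu−νv} du dv. Define Ψ₁(t) = (ν/(μ+ν))·e^{μt} for t ≤ 0, Ψ₁(t) = 1 − (μ/(μ+ν))·e^{−νt} for t > 0, and Ψ_{k+1} = TΨ_k for k ≥ 1. Then for every real t the sequence (Ψ_k(t))_{k≥1} converges, and its limit is Ψ(t) = (ν²/(μ²+ν²))·e^{μt} for t ≤ 0 and Ψ(t) = 1 − (μ²/(μ²+ν²))·e^{−νt} for t > 0. -/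
open MeasureTheory Filter Set Real

lemma intExpIoi (a : ℝ) {b : ℝ} (hb : 0 < b) :
    ∫ x in Ioi a, Real.exp (-b*x) = Real.exp (-b*a)/b := by
  have h : ∀ x ∈ Ici a, HasDerivAt (fun x => -Real.exp (-b*x)/b) (Real.exp (-b*x)) x := by
    intro x _
    have : HasDerivAt (fun x => Real.exp (-b*x)) (Real.exp (-b*x) * (-b)) x :=
      (Real.hasDerivAt_exp _).comp x (by simpa [neg_mul] using (hasDerivAt_id x).const_mul (-b) : HasDerivAt (fun y : ℝ => -b*y) (-b) x)
    refine ((this.neg).div_const b).congr_deriv ?_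
    field_simp
  have htend : Tendsto (fun x => -Real.exp (-b*x)/b) atTop (nhds 0) := by
    have : Tendsto (fun x : ℝ => Real.exp (-b*x)) atTop (nhds 0) := by
      have := Real.tendsto_exp_atBot.comp (tendsto_id.const_mul_atTop_of_neg (neg_neg_iff_pos.2 hb) : Tendsto (fun x : ℝ => -b*x) atTop atBot)
      exact this
    simpa using (this.neg).div_const b
  have := integral_Ioi_of_hasDerivAt_of_tendsto' h (exp_neg_integrableOn_Ioi a hb) htend
  rw [this]; ring

lemma tendsto_mul_exp_neg {b : ℝ} (hb : 0 < b) :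
    Tendsto (fun x : ℝ => x * Real.exp (-b*x)) atTop (nhds 0) := by
  have h1 := tendsto_pow_mul_exp_neg_atTop_nhds_zero 1
  have h2 : Tendsto (fun x : ℝ => b * x) atTop atTop :=
    tendsto_id.const_mul_atTop hb
  have h3 := h1.comp h2
  have h3' : Tendsto (fun x : ℝ => b * (x * Real.exp (-b*x))) atTop (nhds 0) := by
    refine h3.congr fun x => ?_
    show (b*x)^1 * Real.exp (-(b*x)) = _
    ring_nf
  have := h3'.div_const b
  simpa [mul_div_cancel_left₀ _ (ne_of_gt hb)] using this

lemma hderivF {b : ℝ} (hb : 0 < b) (x : ℝ) :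
    HasDerivAt (fun x => -((x/b + 1/b^2) * Real.exp (-b*x))) (x * Real.exp (-b*x)) x := by
  have he : HasDerivAt (fun x => Real.exp (-b*x)) (Real.exp (-b*x) * (-b)) x :=
    (Real.hasDerivAt_exp _).comp x (by simpa [neg_mul] using (hasDerivAt_id x).const_mul (-b) : HasDerivAt (fun y : ℝ => -b*y) (-b) x)
  have hl : HasDerivAt (fun x : ℝ => x/b + 1/b^2) (1/b) x := by
    have := ((hasDerivAt_id x).div_const b).add_const (1/b^2)
    simpa using this
  have := (hl.mul he).neg
  refine this.congr_deriv ?_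
  field_simp
  ring

lemma mulExpIntegrable {b : ℝ} (hb : 0 < b) :
    IntegrableOn (fun x : ℝ => x * Real.exp (-b*x)) (Ioi 0) := by
  have htend : Tendsto (fun x => -((x/b + 1/b^2) * Real.exp (-b*x))) atTop (nhds 0) := by
    have h1 := (tendsto_mul_exp_neg hb).div_const b
    have h2 : Tendsto (fun x : ℝ => Real.exp (-b*x)) atTop (nhds 0) :=
      Real.tendsto_exp_atBot.comp (tendsto_id.const_mul_atTop_of_neg (neg_neg_iff_pos.2 hb))
    have := ((h1.add (h2.const_mul (1/b^2))).neg)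
    simpa [div_eq_mul_inv, mul_comm, mul_assoc, add_mul] using this.congr (by intro x; ring)
  exact integrableOn_Ioi_deriv_of_nonneg' (fun x hx => hderivF hb x)
    (fun x hx => mul_nonneg (le_of_lt hx) (Real.exp_pos _).le) (by simpa using htend)

lemma intMulExpIoi {b : ℝ} (hb : 0 < b) :
    ∫ x in Ioi (0:ℝ), x * Real.exp (-b*x) = 1/b^2 := by
  have htend : Tendsto (fun x => -((x/b + 1/b^2) * Real.exp (-b*x))) atTop (nhds 0) := by
    have h1 := (tendsto_mul_exp_neg hb).div_const b
    have h2 : Tendsto (fun x : ℝ => Real.exp (-b*x)) atTop (nhds 0) :=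
      Real.tendsto_exp_atBot.comp (tendsto_id.const_mul_atTop_of_neg (neg_neg_iff_pos.2 hb))
    have := ((h1.add (h2.const_mul (1/b^2))).neg)
    simpa [div_eq_mul_inv, mul_comm, mul_assoc, add_mul] using this.congr (by intro x; ring)
  have := integral_Ioi_of_hasDerivAt_of_tendsto' (fun x _ => hderivF hb x)
    (mulExpIntegrable hb) htend
  rw [this]; simp

lemma intExpInterval {b : ℝ} (hb : 0 < b) (u : ℝ) :
    ∫ x in (0:ℝ)..u, Real.exp (-b*x) = (1 - Real.exp (-b*u))/b := by
  have h : ∀ x ∈ Set.uIcc (0:ℝ) u, HasDerivAt (fun x => -Real.exp (-b*x)/b) (Real.exp (-b*x)) x := by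
    intro x _
    have : HasDerivAt (fun x => Real.exp (-b*x)) (Real.exp (-b*x) * (-b)) x :=
      (Real.hasDerivAt_exp _).comp x (by simpa [neg_mul] using (hasDerivAt_id x).const_mul (-b) : HasDerivAt (fun y : ℝ => -b*y) (-b) x)
    refine ((this.neg).div_const b).congr_deriv ?_
    field_simp
  rw [intervalIntegral.integral_eq_sub_of_hasDerivAt h
    ((Real.continuous_exp.comp (continuous_const.mul continuous_id)).intervalIntegrable 0 u)]
  simp; ring

lemma inner_integral (μ ν a b : ℝ) (hμ : 0 < μ) (hν : 0 < ν) {u : ℝ} (hu : 0 < u) :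
    ∫ v in Ioi (0:ℝ),
      (if u - v ≤ 0 then a * Real.exp (μ*(u-v)) else 1 - b * Real.exp (-ν*(u-v)))
        * Real.exp (-μ*u - ν*v)
    = Real.exp (-μ*u) * (1 - Real.exp (-ν*u))/ν - b*u*Real.exp (-(μ+ν)*u)
      + a * Real.exp (-(μ+ν)*u)/(μ+ν) := by
  set f : ℝ → ℝ := fun v =>
    (if u - v ≤ 0 then a * Real.exp (μ*(u-v)) else 1 - b * Real.exp (-ν*(u-v)))
      * Real.exp (-μ*u - ν*v) with hf
  have hsplit : Ioi (0:ℝ) = Ioo 0 u ∪ Ici u := (Set.Ioo_union_Ici_eq_Ioi hu).symm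
  have hdisj : Disjoint (Ioo (0:ℝ) u) (Ici u) := by
    apply Set.disjoint_left.2
    intro x hx hx'
    exact absurd hx'.out (not_le.2 hx.2)
  -- closed forms on each piece
  have hg1 : EqOn f (fun v => Real.exp (-μ*u) * (Real.exp (-ν*v) - b * Real.exp (-ν*u))) (Ioo 0 u) := by
    intro v hv
    have h1 : ¬ (u - v ≤ 0) := by simp [sub_nonneg]; nlinarith [hv.2]
    have e1 : Real.exp (-μ*u - ν*v) = Real.exp (-μ*u) * Real.exp (-ν*v) := by
      rw [← Real.exp_add, Real.exp_eq_exp]; ring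
    have e2 : Real.exp (-ν*(u-v)) * Real.exp (-μ*u - ν*v) = Real.exp (-μ*u) * Real.exp (-ν*u) := by
      rw [← Real.exp_add, ← Real.exp_add, Real.exp_eq_exp]; ring
    simp only [hf, if_neg h1, sub_mul, one_mul]
    rw [mul_assoc, e2, e1]
    ring
  have hg2 : EqOn f (fun v => a * Real.exp (-(μ+ν)*v)) (Ici u) := by
    intro v hv
    have h1 : u - v ≤ 0 := by simp only [mem_Ici] at hv; linarith
    have e3 : Real.exp (μ*(u-v)) * Real.exp (-μ*u - ν*v) = Real.exp (-(μ+ν)*v) := by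
      rw [← Real.exp_add, Real.exp_eq_exp]; ring
    simp only [hf, if_pos h1]
    rw [mul_assoc, e3]
  have hμν : (0:ℝ) < μ + ν := by linarith
  have hint1 : IntegrableOn (fun v => Real.exp (-μ*u) * (Real.exp (-ν*v) - b * Real.exp (-ν*u))) (Ioo 0 u) := by
    exact ((by fun_prop : Continuous fun v : ℝ => Real.exp (-μ*u) * (Real.exp (-ν*v) - b * Real.exp (-ν*u))).integrableOn_Ioc).mono_set Ioo_subset_Ioc_self
  have hi1 : IntegrableOn f (Ioo 0 u) := hint1.congr_fun hg1.symm measurableSet_Ioo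
  have hint2 : IntegrableOn (fun v => a * Real.exp (-(μ+ν)*v)) (Ici u) :=
    (integrableOn_Ici_iff_integrableOn_Ioi).mpr ((exp_neg_integrableOn_Ioi u hμν).const_mul a)
  have hi2 : IntegrableOn f (Ici u) := hint2.congr_fun hg2.symm measurableSet_Ici
  have key : ∫ v in Ioi (0:ℝ), f v = (∫ v in Ioo (0:ℝ) u, f v) + ∫ v in Ici u, f v := by
    rw [hsplit]
    exact setIntegral_union hdisj measurableSet_Ici hi1 hi2
  rw [key, setIntegral_congr_fun measurableSet_Ioo hg1, setIntegral_congr_fun measurableSet_Ici hg2]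
  have p1 : (∫ v in Ioo (0:ℝ) u, Real.exp (-μ*u) * (Real.exp (-ν*v) - b * Real.exp (-ν*u)))
      = Real.exp (-μ*u) * ((1 - Real.exp (-ν*u))/ν - b * Real.exp (-ν*u) * u) := by
    rw [← integral_Ioc_eq_integral_Ioo, ← intervalIntegral.integral_of_le hu.le,
      intervalIntegral.integral_const_mul]
    congr 1
    rw [intervalIntegral.integral_sub
      ((by fun_prop : Continuous fun x : ℝ => Real.exp (-ν*x)).intervalIntegrable 0 u)
      (intervalIntegrable_const), intExpInterval hν u, intervalIntegral.integral_const]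
    simp [mul_comm]
  have p2 : (∫ v in Ici u, a * Real.exp (-(μ+ν)*v)) = a * (Real.exp (-(μ+ν)*u)/(μ+ν)) := by
    rw [integral_Ici_eq_integral_Ioi, MeasureTheory.integral_const_mul, intExpIoi u hμν]
  rw [p1, p2]
  have e4 : Real.exp (-μ*u) * Real.exp (-ν*u) = Real.exp (-(μ+ν)*u) := by
    rw [← Real.exp_add, Real.exp_eq_exp]; ring
  rw [← e4]
  ring

lemma double_integral (μ ν a b : ℝ) (hμ : 0 < μ) (hν : 0 < ν) :
    ∫ u in Ioi (0:ℝ), ∫ v in Ioi (0:ℝ),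
      (if u - v ≤ 0 then a * Real.exp (μ*(u-v)) else 1 - b * Real.exp (-ν*(u-v)))
        * Real.exp (-μ*u - ν*v)
    = a/(μ+ν)^2 + 1/(μ*(μ+ν)) - b/(μ+ν)^2 := by
  have hμν : (0:ℝ) < μ + ν := by linarith
  have step1 : ∫ u in Ioi (0:ℝ), (∫ v in Ioi (0:ℝ),
      (if u - v ≤ 0 then a * Real.exp (μ*(u-v)) else 1 - b * Real.exp (-ν*(u-v)))
        * Real.exp (-μ*u - ν*v))
      = ∫ u in Ioi (0:ℝ), ((1/ν) * Real.exp (-μ*u)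
        + ((a/(μ+ν) - 1/ν) * Real.exp (-(μ+ν)*u) + (-b) * (u * Real.exp (-(μ+ν)*u)))) := by
    apply setIntegral_congr_fun measurableSet_Ioi
    intro u hu
    dsimp only
    rw [inner_integral μ ν a b hμ hν hu.out]
    have e4 : Real.exp (-μ*u) * Real.exp (-ν*u) = Real.exp (-(μ+ν)*u) := by
      rw [← Real.exp_add, Real.exp_eq_exp]; ring
    rw [← e4]; ring
  rw [step1]
  have i1 : IntegrableOn (fun u : ℝ => (1/ν) * Real.exp (-μ*u)) (Ioi 0) :=
    (exp_neg_integrableOn_Ioi 0 hμ).const_mul _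
  have i2 : IntegrableOn (fun u : ℝ => (a/(μ+ν) - 1/ν) * Real.exp (-(μ+ν)*u)) (Ioi 0) :=
    (exp_neg_integrableOn_Ioi 0 hμν).const_mul _
  have i3 : IntegrableOn (fun u : ℝ => (-b) * (u * Real.exp (-(μ+ν)*u))) (Ioi 0) :=
    (mulExpIntegrable hμν).const_mul _
  have i23 : IntegrableOn (fun u : ℝ => (a/(μ+ν) - 1/ν) * Real.exp (-(μ+ν)*u)
      + (-b) * (u * Real.exp (-(μ+ν)*u))) (Ioi 0) := i2.add i3
  rw [MeasureTheory.integral_add i1 i23, MeasureTheory.integral_add i2 i3,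
    MeasureTheory.integral_const_mul, MeasureTheory.integral_const_mul,
    MeasureTheory.integral_const_mul, intExpIoi 0 hμ, intExpIoi 0 hμν, intMulExpIoi hμν]
  simp only [mul_zero, neg_zero, Real.exp_zero]
  field_simp
  ring

/-- The sequence `Ψ_k` produced by the one-step recursion operator starting
from `Ψ₁` converges pointwise, with limit `Ψ(t) = (ν²/(μ²+ν²))e^{μt}` for `t ≤ 0` and
`Ψ(t) = 1 - (μ²/(μ²+ν²))e^{-νt}` for `t > 0`. -/
theorem psi_sequence_converges (μ ν : ℝ) (hμ : 0 < μ) (hν : 0 < ν)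
    (Ψ : ℕ → ℝ → ℝ)
    (hΨ₁ : ∀ t : ℝ, Ψ 1 t = if t ≤ 0 then ν/(μ+ν) * Real.exp (μ*t)
      else 1 - μ/(μ+ν) * Real.exp (-ν*t))
    (hrec : ∀ k : ℕ, 1 ≤ k → ∀ t : ℝ, Ψ (k+1) t =
      if t ≤ 0 then
        μ * ν * Real.exp (μ*t) *
          ∫ u in Set.Ioi (0:ℝ), ∫ v in Set.Ioi (0:ℝ), Ψ k (u - v) * Real.exp (-μ*u - ν*v)
      else
        μ * ν * Real.exp (-ν*t) *
          (∫ u in Set.Ioi (0:ℝ), ∫ v in Set.Ioi (0:ℝ), Ψ k (u - v) * Real.exp (-μ*u - ν*v))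
          + 1 - Real.exp (-ν*t)) :
    ∀ t : ℝ, Tendsto (fun k : ℕ => Ψ k t) atTop
      (nhds (if t ≤ 0 then ν^2/(μ^2+ν^2) * Real.exp (μ*t)
        else 1 - μ^2/(μ^2+ν^2) * Real.exp (-ν*t))) := by
  have hμν : (0:ℝ) < μ + ν := by linarith
  have hμν2 : (0:ℝ) < μ^2 + ν^2 := by positivity
  set r : ℝ := 2*μ*ν/(μ+ν)^2 with hr
  set L : ℝ := ν^2/(μ^2+ν^2) with hL
  set A : ℕ → ℝ := fun n => L + r^n * (ν/(μ+ν) - L) with hA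
  have hA0 : A 0 = ν/(μ+ν) := by simp [hA]
  have hfix : L - r * L = ν^2/(μ+ν)^2 := by
    rw [hL, hr]; field_simp; ring
  have hArec : ∀ n : ℕ, A (n+1) = r * A n + ν^2/(μ+ν)^2 := by
    intro n
    simp only [hA]
    rw [pow_succ]
    linear_combination hfix
  have hform : ∀ n : ℕ, ∀ s : ℝ,
      Ψ (n+1) s = if s ≤ 0 then A n * Real.exp (μ*s) else 1 - (1 - A n) * Real.exp (-ν*s) := by
    intro n
    induction n with
    | zero =>
      intro s
      have hc : 1 - A 0 = μ/(μ+ν) := by rw [hA0]; field_simp; ring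
      rw [hΨ₁ s, hA0, ← hc, hA0]
    | succ n ih =>
      intro s
      rw [hrec (n+1) (by omega) s]
      have hint : (∫ u in Set.Ioi (0:ℝ), ∫ v in Set.Ioi (0:ℝ), Ψ (n+1) (u - v) * Real.exp (-μ*u - ν*v))
          = A n/(μ+ν)^2 + 1/(μ*(μ+ν)) - (1 - A n)/(μ+ν)^2 := by
        rw [← double_integral μ ν (A n) (1 - A n) hμ hν]
        apply setIntegral_congr_fun measurableSet_Ioi
        intro u _
        dsimp only
        apply setIntegral_congr_fun measurableSet_Ioi
        intro v _
        dsimp only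
        rw [ih (u - v)]
      rw [hint]
      have hval : μ * ν * (A n/(μ+ν)^2 + 1/(μ*(μ+ν)) - (1 - A n)/(μ+ν)^2) = A (n+1) := by
        rw [hArec n, hr]
        field_simp
        ring
      by_cases h : s ≤ 0
      · rw [if_pos h, if_pos h, ← hval]; ring
      · rw [if_neg h, if_neg h, ← hval]; ring
  have hrabs : |r| < 1 := by
    rw [abs_of_nonneg (by positivity)]
    rw [hr, div_lt_one (by positivity)]
    nlinarith
  have hAtend : Tendsto A atTop (nhds L) := by
    have h0 : Tendsto (fun n : ℕ => r^n) atTop (nhds 0) :=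
      tendsto_pow_atTop_nhds_zero_of_abs_lt_one hrabs
    have := (h0.mul_const (ν/(μ+ν) - L)).const_add L
    simpa [hA] using this
  have hAtend' : Tendsto (fun k : ℕ => A (k-1)) atTop (nhds L) :=
    hAtend.comp (tendsto_sub_atTop_nat 1)
  intro t
  by_cases h : t ≤ 0
  · rw [if_pos h]
    have h1 : Tendsto (fun k : ℕ => A (k-1) * Real.exp (μ*t)) atTop
        (nhds (L * Real.exp (μ*t))) := hAtend'.mul_const _
    rw [show ν^2/(μ^2+ν^2) * Real.exp (μ*t) = L * Real.exp (μ*t) from rfl]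
    refine h1.congr' ?_
    filter_upwards [eventually_ge_atTop 1] with k hk
    obtain ⟨n, rfl⟩ : ∃ n, k = n+1 := ⟨k-1, (Nat.succ_pred_eq_of_pos hk).symm⟩
    rw [hform n t, if_pos h]
    simp
  · rw [if_neg h]
    have h1 : Tendsto (fun k : ℕ => 1 - (1 - A (k-1)) * Real.exp (-ν*t)) atTop
        (nhds (1 - (1 - L) * Real.exp (-ν*t))) :=
      tendsto_const_nhds.sub ((tendsto_const_nhds.sub hAtend').mul_const _)
    have hc : 1 - L = μ^2/(μ^2+ν^2) := by rw [hL]; field_simp; ring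
    rw [show (1 : ℝ) - μ^2/(μ^2+ν^2) * Real.exp (-ν*t) = 1 - (1 - L) * Real.exp (-ν*t) by rw [hc]]
    refine h1.congr' ?_
    filter_upwards [eventually_ge_atTop 1] with k hk
    obtain ⟨n, rfl⟩ : ∃ n, k = n+1 := ⟨k-1, (Nat.succ_pred_eq_of_pos hk).symm⟩
    rw [hform n t, if_neg h]
    simp
end
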